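/- Consider an N-player game in which each cost function f_i is defined on all of ℝ^{n̄} (n̄ = Σ_i n_i) with strategy sets K_i ⊆ ℝ^{n_i}. Then the game is a potential game if and only if for all players i < j and all z_i, y_i ∈ ℝ^{n_i}, z_j, y_j ∈ ℝ^{n_j}, z_{-{i,j}} ∈ ℝ^{n̄ − n_i − n_j}, one has h_{ij}(z_i, z_j, y_i, y_j; z_{-{i,j}}) = h_{ij}(0, 0, z_i + y_i, z_j + y_j; z_{-{i,j}}) − h_{ij}(0, 0, z_i, z_j; z_{-{i,j}}). -/
import Mathlib


noncomputable section

/-- The set of joint strategy profiles of a game with strategy sets `K i ⊆ ℝ^{n i}`. -/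
def jointK {N : ℕ} {n : Fin N → ℕ}
    (K : ∀ i, Set (EuclideanSpace ℝ (Fin (n i)))) :
    Set (∀ i, EuclideanSpace ℝ (Fin (n i))) :=
  {x | ∀ i, x i ∈ K i}

/-- `φ` is an exact potential function for the game with strategy sets `K` and costs `f`. -/
def IsPotential {N : ℕ} {n : Fin N → ℕ}
    (K : ∀ i, Set (EuclideanSpace ℝ (Fin (n i))))
    (f : Fin N → (∀ i, EuclideanSpace ℝ (Fin (n i))) → ℝ)
    (φ : (∀ i, EuclideanSpace ℝ (Fin (n i))) → ℝ) : Prop :=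
  ∀ i : Fin N, ∀ x ∈ jointK K, ∀ xi' ∈ K i,
    f i (Function.update x i xi') - f i x = φ (Function.update x i xi') - φ x

/-- The game is a potential game. -/
def IsPotentialGame {N : ℕ} {n : Fin N → ℕ}
    (K : ∀ i, Set (EuclideanSpace ℝ (Fin (n i))))
    (f : Fin N → (∀ i, EuclideanSpace ℝ (Fin (n i))) → ℝ) : Prop :=
  ∃ φ, IsPotential K f φ

/-- `hij f i j z yi yj` : the pairwise incremental cost difference
`f_i(z_i+y_i, z_j; z₋) − f_i(z_i, z_j; z₋) + f_j(z_j+y_j, z_i+y_i; z₋) − f_j(z_j, z_i+y_i; z₋)`. -/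
def hij {N : ℕ} {n : Fin N → ℕ}
    (f : Fin N → (∀ k, EuclideanSpace ℝ (Fin (n k))) → ℝ)
    (i j : Fin N) (z : ∀ k, EuclideanSpace ℝ (Fin (n k)))
    (yi : EuclideanSpace ℝ (Fin (n i))) (yj : EuclideanSpace ℝ (Fin (n j))) : ℝ :=
  f i (Function.update z i (z i + yi)) - f i z
    + f j (Function.update (Function.update z i (z i + yi)) j (z j + yj))
    - f j (Function.update z i (z i + yi))

/-- `φ` is a global potential for the cost collection `f` (the potential property holds
on all of `ℝ^{n̄}`). -/
def IsGlobalPotential {N : ℕ} {n : Fin N → ℕ}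
    (f : Fin N → (∀ i, EuclideanSpace ℝ (Fin (n i))) → ℝ)
    (φ : (∀ i, EuclideanSpace ℝ (Fin (n i))) → ℝ) : Prop :=
  ∀ (i : Fin N) (x : ∀ j, EuclideanSpace ℝ (Fin (n j))) (xi' : EuclideanSpace ℝ (Fin (n i))),
    f i (Function.update x i xi') - f i x = φ (Function.update x i xi') - φ x


section Aux
variable {N : ℕ} {n : Fin N → ℕ}

private lemma hijExpand (f : Fin N → (∀ k, EuclideanSpace ℝ (Fin (n k))) → ℝ)
    (i j : Fin N) (z : ∀ k, EuclideanSpace ℝ (Fin (n k)))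
    (a : EuclideanSpace ℝ (Fin (n i))) (b : EuclideanSpace ℝ (Fin (n j))) :
    hij f i j z (a - z i) (b - z j)
      = f i (Function.update z i a) - f i z
        + f j (Function.update (Function.update z i a) j b)
        - f j (Function.update z i a) := by
  have h1 : z i + (a - z i) = a := by abel
  have h2 : z j + (b - z j) = b := by abel
  simp only [hij, h1, h2]

private def Pfun (x : ∀ i, EuclideanSpace ℝ (Fin (n i))) (m : ℕ) :
    ∀ i, EuclideanSpace ℝ (Fin (n i)) :=
  fun l => if (l : ℕ) < m then x l else 0

private lemma Pfun_top (x : ∀ i, EuclideanSpace ℝ (Fin (n i))) : Pfun x N = x :=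
  funext fun l => if_pos l.isLt

private lemma Pfun_succ (x : ∀ i, EuclideanSpace ℝ (Fin (n i))) {m : ℕ} (hm : m < N) :
    Pfun x (m + 1) = Function.update (Pfun x m) ⟨m, hm⟩ (x ⟨m, hm⟩) := by
  funext l
  by_cases hl : l = ⟨m, hm⟩
  · subst hl
    simp [Pfun]
  · rw [Function.update_of_ne hl]
    have hne : (l : ℕ) ≠ m := fun h => hl (Fin.ext h)
    have h2 : ((l : ℕ) < m + 1) ↔ ((l : ℕ) < m) := by omega
    simp [Pfun, h2]

private lemma Pfun_agree (x : ∀ i, EuclideanSpace ℝ (Fin (n i))) (i : Fin N)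
    (a : EuclideanSpace ℝ (Fin (n i))) {m : ℕ} (hm : m ≤ (i : ℕ)) :
    Pfun (Function.update x i a) m = Pfun x m := by
  funext l
  by_cases hl : (l : ℕ) < m
  · have hne : l ≠ i := fun h => by subst h; omega
    simp [Pfun, hl, Function.update_of_ne hne]
  · simp [Pfun, hl]

private lemma Pfun_update (x : ∀ i, EuclideanSpace ℝ (Fin (n i))) (i : Fin N)
    (a : EuclideanSpace ℝ (Fin (n i))) {m : ℕ} (hm : (i : ℕ) < m) :
    Pfun (Function.update x i a) m = Function.update (Pfun x m) i a := by
  funext l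
  by_cases hl : l = i
  · subst hl
    simp [Pfun, hm]
  · rw [Function.update_of_ne hl]
    simp [Pfun, Function.update_of_ne hl]

private def phiAux (f : Fin N → (∀ i, EuclideanSpace ℝ (Fin (n i))) → ℝ) (m : ℕ)
    (y : ∀ i, EuclideanSpace ℝ (Fin (n i))) : ℝ :=
  ∑ k ∈ Finset.univ.filter (fun k : Fin N => (k : ℕ) < m),
    (f k (Pfun y ((k : ℕ) + 1)) - f k (Pfun y (k : ℕ)))

private lemma phiAux_zero (f : Fin N → (∀ i, EuclideanSpace ℝ (Fin (n i))) → ℝ)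
    (y : ∀ i, EuclideanSpace ℝ (Fin (n i))) : phiAux f 0 y = 0 := by
  simp [phiAux]

private lemma phiAux_succ (f : Fin N → (∀ i, EuclideanSpace ℝ (Fin (n i))) → ℝ)
    {m : ℕ} (hm : m < N) (y : ∀ i, EuclideanSpace ℝ (Fin (n i))) :
    phiAux f (m + 1) y
      = phiAux f m y + (f ⟨m, hm⟩ (Pfun y (m + 1)) - f ⟨m, hm⟩ (Pfun y m)) := by
  have hset : Finset.univ.filter (fun k : Fin N => (k : ℕ) < m + 1)
      = insert (⟨m, hm⟩ : Fin N) (Finset.univ.filter (fun k : Fin N => (k : ℕ) < m)) := by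
    ext k
    simp [Finset.mem_insert, Fin.ext_iff]
    omega
  have hnotmem : (⟨m, hm⟩ : Fin N) ∉ Finset.univ.filter (fun k : Fin N => (k : ℕ) < m) := by
    simp
  rw [phiAux, hset, Finset.sum_insert hnotmem]
  simp only [phiAux]
  ring

end Aux

/-- If the costs are defined on all of `ℝ^{n̄}`, the game is a potential
game iff for all players `i < j` and all `z_i, y_i, z_j, y_j, z₋`,
`h_{ij}(z_i,z_j,y_i,y_j;z₋) = h_{ij}(0,0,z_i+y_i,z_j+y_j;z₋) − h_{ij}(0,0,z_i,z_j;z₋)`. -/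
theorem stmt9 {N : ℕ} {n : Fin N → ℕ}
    (K : ∀ i, Set (EuclideanSpace ℝ (Fin (n i))))
    (f : Fin N → (∀ i, EuclideanSpace ℝ (Fin (n i))) → ℝ) :
    (∃ φ, IsGlobalPotential f φ) ↔
      ∀ i j : Fin N, i < j → ∀ z : ∀ k, EuclideanSpace ℝ (Fin (n k)),
        ∀ (yi : EuclideanSpace ℝ (Fin (n i))) (yj : EuclideanSpace ℝ (Fin (n j))),
          hij f i j z yi yj
            = hij f i j (Function.update (Function.update z i 0) j 0) (z i + yi) (z j + yj)
              - hij f i j (Function.update (Function.update z i 0) j 0) (z i) (z j) := by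
  constructor
  · rintro ⟨φ, hφ⟩ i j hlt z yi yj
    have hne : i ≠ j := Fin.ne_of_lt hlt
    have key : ∀ (Z : ∀ k, EuclideanSpace ℝ (Fin (n k)))
        (u : EuclideanSpace ℝ (Fin (n i))) (v : EuclideanSpace ℝ (Fin (n j))),
        hij f i j Z u v
          = φ (Function.update (Function.update Z i (Z i + u)) j (Z j + v)) - φ Z := by
      intro Z u v
      have h1 := hφ i Z (Z i + u)
      have h2 := hφ j (Function.update Z i (Z i + u)) (Z j + v)
      simp only [hij]
      linarith
    rw [key z yi yj, key _ (z i + yi) (z j + yj), key _ (z i) (z j)]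
    have hwi : (Function.update (Function.update z i 0) j 0) i = 0 := by
      rw [Function.update_of_ne hne, Function.update_self]
    have hwj : (Function.update (Function.update z i 0) j 0) j = 0 :=
      Function.update_self _ _ _
    rw [hwi, hwj]
    simp only [zero_add]
    have ew : ∀ v : EuclideanSpace ℝ (Fin (n i)),
        Function.update (Function.update (Function.update z i 0) j 0) i v
          = Function.update (Function.update z i v) j 0 := by
      intro v
      rw [Function.update_comm hne.symm, Function.update_idem]
    rw [ew, ew, Function.update_idem, Function.update_idem,
      Function.update_eq_self, Function.update_eq_self]
    ring
  · intro hyp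
    have FC : ∀ i k : Fin N, i < k → ∀ (z : ∀ l, EuclideanSpace ℝ (Fin (n l)))
        (a : EuclideanSpace ℝ (Fin (n i))) (b : EuclideanSpace ℝ (Fin (n k))),
        f i (Function.update (Function.update z i a) k b) - f i (Function.update z k b)
          - (f i (Function.update z i a) - f i z)
        = f k (Function.update (Function.update z i a) k b) - f k (Function.update z i a)
          - (f k (Function.update z k b) - f k z) := by
      intro i k hik z a b
      have hne : i ≠ k := Fin.ne_of_lt hik
      have hne' : k ≠ i := hne.symm
      have h2 := hyp i k hik z (a - z i) (z k - z k)
      have h4 := hyp i k hik z (z i - z i) (b - z k)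
      have h3 := hyp i k hik (Function.update z k b)
        (a - (Function.update z k b) i) (b - (Function.update z k b) k)
      have h5 := hyp i k hik (Function.update z i a)
        ((Function.update z i a) i - (Function.update z i a) i)
        (b - (Function.update z i a) k)
      -- clean h2
      rw [hijExpand f i k z a (z k),
        show z i + (a - z i) = a from by abel,
        show z k + (z k - z k) = z k from by abel,
        show Function.update (Function.update z i a) k (z k) = Function.update z i a from by
          rw [← Function.update_of_ne hne' a z, Function.update_eq_self]] at h2
      -- clean h4
      rw [hijExpand f i k z (z i) b, Function.update_eq_self,
        show z i + (z i - z i) = z i from by abel,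
        show z k + (b - z k) = b from by abel] at h4
      -- clean h3
      rw [hijExpand f i k (Function.update z k b) a b,
        Function.update_comm hne' b a z, Function.update_idem,
        Function.update_of_ne hne b z, Function.update_self k b z,
        show z i + (a - z i) = a from by abel,
        show b + (b - b) = b from by abel,
        show Function.update (Function.update (Function.update z k b) i 0) k 0
            = Function.update (Function.update z i 0) k 0 from by
          rw [Function.update_comm hne' b 0 z, Function.update_idem]] at h3
      -- clean h5
      rw [hijExpand f i k (Function.update z i a) ((Function.update z i a) i) b,
        Function.update_eq_self, Function.update_self i a z,
        Function.update_of_ne hne' a z, Function.update_idem,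
        show a + (a - a) = a from by abel,
        show z k + (b - z k) = b from by abel] at h5
      linarith
    refine ⟨phiAux f N, ?_⟩
    intro i x a
    have main : ∀ m : ℕ, m ≤ N →
        f i (Pfun (Function.update x i a) m) - f i (Pfun x m)
          = phiAux f m (Function.update x i a) - phiAux f m x := by
      intro m
      induction m with
      | zero =>
        intro _
        have h0 : Pfun (Function.update x i a) 0 = Pfun x 0 := by
          funext l; simp [Pfun]
        rw [h0, phiAux_zero, phiAux_zero]
        ring
      | succ m ih =>
        intro hm1
        have hm : m < N := hm1
        have ihm := ih hm.le
        rw [phiAux_succ f hm, phiAux_succ f hm,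
          Pfun_succ (Function.update x i a) hm, Pfun_succ x hm]
        rcases lt_trichotomy (i : ℕ) m with hem | hem | hem
        · -- i < m : four-cycle step
          have hki : (⟨m, hm⟩ : Fin N) ≠ i := by
            simp only [ne_eq, Fin.ext_iff]; omega
          have hx'k : Function.update x i a ⟨m, hm⟩ = x ⟨m, hm⟩ :=
            Function.update_of_ne hki a x
          have hPm : Pfun (Function.update x i a) m = Function.update (Pfun x m) i a :=
            Pfun_update x i a hem
          rw [hx'k, hPm]
          have hik : i < (⟨m, hm⟩ : Fin N) := by
            rw [Fin.lt_def]; exact hem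
          have hfc := FC i ⟨m, hm⟩ hik (Pfun x m) a (x ⟨m, hm⟩)
          have hS : f i (Function.update (Pfun x m) i a) - f i (Pfun x m)
              = phiAux f m (Function.update x i a) - phiAux f m x := by
            rw [← hPm]; exact ihm
          linarith
        · -- i = m
          have hk : (⟨m, hm⟩ : Fin N) = i := Fin.ext (by simp; omega)
          rw [hk]
          have hPm : Pfun (Function.update x i a) m = Pfun x m :=
            Pfun_agree x i a (by omega)
          rw [hPm, Function.update_self]
          rw [hPm] at ihm
          linarith
        · -- m < i
          have hki : (⟨m, hm⟩ : Fin N) ≠ i := by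
            simp only [ne_eq, Fin.ext_iff]; omega
          have hx'k : Function.update x i a ⟨m, hm⟩ = x ⟨m, hm⟩ :=
            Function.update_of_ne hki a x
          have hPm : Pfun (Function.update x i a) m = Pfun x m :=
            Pfun_agree x i a (by omega)
          rw [hx'k, hPm]
          rw [hPm] at ihm
          linarith
    have hmain := main N (le_refl N)
    rw [Pfun_top, Pfun_top] at hmain
    exact hmain
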